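/- Let i ≥ 1 and j ≥ 0 be integers and let A be a symmetric n×n matrix with entries in {0,1} with i + j + 1 ≤ n and 2·min(i, j+1) ≤ n, with eigenvalues λ_1 ≥ ⋯ ≥ λ_n. Then λ_{i+1}(A) − λ_{n−j}(A) ≤ n/√(2·min(i, j+1)). -/

import Mathlib

open Finset Matrix

section Helpers

lemma antitone_unique_of_multiset {n : ℕ} {f g : Fin n → ℝ} (hf : Antitone f) (hg : Antitone g)
    (h : Finset.univ.val.map f = Finset.univ.val.map g) : f = g := by
  have key : ∀ (a : ℝ) (t : Fin n), a ≤ f t ↔ a ≤ g t := by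
    intro a t
    have hcard : ∀ h : Fin n → ℝ, Fintype.card {x // a ≤ h x} =
        Multiset.card ((Finset.univ.val.map h).filter (a ≤ ·)) := by
      intro h
      rw [Fintype.card_subtype, Multiset.filter_map, Multiset.card_map]
      rfl
    have hc : Fintype.card {x // a ≤ f x} = Fintype.card {x // a ≤ g x} := by
      rw [hcard, hcard, h]
    rw [Fintype.card_subtype, Fintype.card_subtype] at hc
    rw [← Tuple.lt_card_ge_iff_apply_ge_of_antitone (f := f) (a := a) (j := t) hf,
      ← Tuple.lt_card_ge_iff_apply_ge_of_antitone (f := g) (a := a) (j := t) hg, hc]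
  funext t
  exact le_antisymm ((key (f t) t).mp le_rfl) ((key (g t) t).mpr le_rfl)

lemma exists_perm_of_multiset {n : ℕ} {f g : Fin n → ℝ} (hf : Antitone f)
    (h : Finset.univ.val.map f = Finset.univ.val.map g) :
    ∃ τ : Equiv.Perm (Fin n), ∀ t, f t = g (τ t) := by
  classical
  set σ₀ := Tuple.sort g with hσ₀
  set τ : Equiv.Perm (Fin n) := (Fin.revPerm).trans σ₀ with hτ
  refine ⟨τ, ?_⟩
  have hmono : Monotone (g ∘ σ₀) := Tuple.monotone_sort g
  have hanti : Antitone (g ∘ ⇑τ) := by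
    intro x y hxy
    exact hmono (by simpa using Fin.rev_le_rev.mpr hxy)
  have hms : Finset.univ.val.map (g ∘ ⇑τ) = Finset.univ.val.map g := by
    have h1 : Finset.univ.val.map ⇑τ = Finset.univ.val := by
      have := congrArg Finset.val (Finset.map_univ_equiv τ)
      simpa [Finset.map_val] using this
    rw [← Multiset.map_map, h1]
  have := antitone_unique_of_multiset hf hanti (h.trans hms.symm)
  exact fun t => congrFun this t

lemma bessel_dot {n : ℕ} {m : Type*} [Fintype m] [DecidableEq m] (v : m → Fin n → ℝ)
    (hv : ∀ s t, v s ⬝ᵥ v t = if s = t then 1 else 0) (x : Fin n → ℝ) :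
    ∑ s, (v s ⬝ᵥ x) ^ 2 ≤ x ⬝ᵥ x := by
  set V : m → EuclideanSpace ℝ (Fin n) := fun s => (WithLp.equiv 2 _).symm (v s) with hVdef
  set X : EuclideanSpace ℝ (Fin n) := (WithLp.equiv 2 _).symm x with hXdef
  have hinner : ∀ (y z : Fin n → ℝ),
      (inner ℝ ((WithLp.equiv 2 _).symm y : EuclideanSpace ℝ (Fin n))
        ((WithLp.equiv 2 _).symm z) : ℝ) = y ⬝ᵥ z := by
    intro y z
    simp [PiLp.inner_apply, dotProduct, mul_comm]
  have hV : Orthonormal ℝ V := by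
    rw [orthonormal_iff_ite]
    intro s t
    rw [hVdef]
    simp only []
    rw [hinner, hv]
  have hb := hV.sum_inner_products_le (𝕜 := ℝ) X (s := Finset.univ)
  calc ∑ s, (v s ⬝ᵥ x) ^ 2 = ∑ s, ‖(inner ℝ (V s) X : ℝ)‖ ^ 2 := by
        refine Finset.sum_congr rfl fun s _ => ?_
        rw [hVdef]
        simp only []
        rw [hinner, Real.norm_eq_abs, sq_abs]
    _ ≤ ‖X‖ ^ 2 := hb
    _ = x ⬝ᵥ x := by rw [← real_inner_self_eq_norm_sq, hXdef, hinner]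

lemma sum_rayleigh_sq_le {n : ℕ} {m : Type*} [Fintype m] [DecidableEq m]
    (C : Matrix (Fin n) (Fin n) ℝ) (v : m → Fin n → ℝ)
    (hv : ∀ s t, v s ⬝ᵥ v t = if s = t then 1 else 0) :
    ∑ s, (v s ⬝ᵥ (C *ᵥ v s)) ^ 2 ≤ ∑ x, ∑ y, (C x y) ^ 2 := by
  have step1 : ∀ s, (v s ⬝ᵥ (C *ᵥ v s)) ^ 2 ≤ (C *ᵥ v s) ⬝ᵥ (C *ᵥ v s) := by
    intro s
    have := bessel_dot (m := Fin 1) (fun _ => v s)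
      (fun a b => by rw [Subsingleton.elim a b]; simpa using hv s s) (C *ᵥ v s)
    simpa using this
  calc ∑ s, (v s ⬝ᵥ (C *ᵥ v s)) ^ 2
      ≤ ∑ s, (C *ᵥ v s) ⬝ᵥ (C *ᵥ v s) := Finset.sum_le_sum fun s _ => step1 s
    _ = ∑ s, ∑ x, (v s ⬝ᵥ (fun y => C x y)) ^ 2 := by
        refine Finset.sum_congr rfl fun s _ => ?_
        simp only [dotProduct]
        refine Finset.sum_congr rfl fun x _ => ?_
        have hx : (C *ᵥ v s) x = (fun y => C x y) ⬝ᵥ v s := rfl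
        rw [hx, dotProduct_comm, sq]
        simp [dotProduct]
    _ = ∑ x, ∑ s, (v s ⬝ᵥ (fun y => C x y)) ^ 2 := Finset.sum_comm
    _ ≤ ∑ x, ((fun y => C x y) ⬝ᵥ (fun y => C x y)) :=
        Finset.sum_le_sum fun x _ => bessel_dot v hv _
    _ = ∑ x, ∑ y, (C x y) ^ 2 := by
        refine Finset.sum_congr rfl fun x _ => ?_
        simp [dotProduct, sq]

lemma exists_top_family (m : ℕ) (c : Fin (m+1) → ℝ) :
    ∃ w : Fin m → (Fin (m+1) → ℝ),
      (∀ s t, w s ⬝ᵥ w t = if s = t then 1 else 0) ∧ ∀ s, c ⬝ᵥ w s = 0 := by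
  classical
  set E := EuclideanSpace ℝ (Fin (m+1))
  set c' : E := (WithLp.equiv 2 _).symm c with hc'
  set K : Submodule ℝ E := (ℝ ∙ c')ᗮ with hK
  have hinner : ∀ (y z : Fin (m+1) → ℝ),
      (inner ℝ ((WithLp.equiv 2 _).symm y : E) ((WithLp.equiv 2 _).symm z) : ℝ) = y ⬝ᵥ z := by
    intro y z
    simp [E, PiLp.inner_apply, dotProduct, mul_comm]
  have hdim : m ≤ Module.finrank ℝ K := by
    have h1 : Module.finrank ℝ (ℝ ∙ c') + Module.finrank ℝ K = m + 1 := by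
      rw [hK, Submodule.finrank_add_finrank_orthogonal]
      simp [E, finrank_euclideanSpace_fin]
    have h2 : Module.finrank ℝ (ℝ ∙ c') ≤ 1 := by
      by_cases hc0 : c' = 0
      · rw [hc0, Submodule.span_zero_singleton]
        simp
      · rw [finrank_span_singleton hc0]
    omega
  set ob := stdOrthonormalBasis ℝ K with hob
  have hoon := ob.orthonormal
  rw [orthonormal_iff_ite] at hoon
  set w : Fin m → (Fin (m+1) → ℝ) :=
    fun s => WithLp.equiv 2 _ ((ob (Fin.castLE hdim s) : K) : E) with hw
  refine ⟨w, ?_, ?_⟩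
  · intro s t
    have h3 := hoon (Fin.castLE hdim s) (Fin.castLE hdim t)
    rw [Submodule.coe_inner] at h3
    have h4 : (inner ℝ ((ob (Fin.castLE hdim s) : K) : E) ((ob (Fin.castLE hdim t) : K) : E) : ℝ)
        = w s ⬝ᵥ w t := by
      rw [hw]
      simp only []
      rw [← hinner]
      congr 1
    rw [h4] at h3
    rw [h3]
    by_cases hst : s = t
    · simp [hst]
    · have : Fin.castLE hdim s ≠ Fin.castLE hdim t := by
        simpa [Fin.ext_iff] using fun h => hst (Fin.ext h)
      simp [hst, this]
  · intro s
    have hmem : ((ob (Fin.castLE hdim s) : K) : E) ∈ (ℝ ∙ c')ᗮ := (ob (Fin.castLE hdim s) : K).2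
    rw [Submodule.mem_orthogonal_singleton_iff_inner_right] at hmem
    calc c ⬝ᵥ w s = (inner ℝ c' ((ob (Fin.castLE hdim s) : K) : E) : ℝ) := by
          rw [hc', ← hinner]
          congr 1
      _ = 0 := hmem

lemma sum_dite_fin {n m : ℕ} (hmn : m ≤ n) (g : Fin m → ℝ) :
    ∑ x : Fin n, (if h : (x : ℕ) < m then g ⟨x, h⟩ else 0) = ∑ t : Fin m, g t := by
  set f : ℕ → ℝ := fun r => if h : r < m then g ⟨r, h⟩ else 0 with hf
  calc ∑ x : Fin n, (if h : (x : ℕ) < m then g ⟨x, h⟩ else 0)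
      = ∑ r ∈ Finset.range n, f r := Fin.sum_univ_eq_sum_range f n
    _ = ∑ r ∈ Finset.range m, f r := by
        refine (Finset.sum_subset (Finset.range_subset_range.mpr hmn) ?_).symm
        intro x _ hx
        rw [Finset.mem_range] at hx
        simp [hf, hx]
    _ = ∑ t : Fin m, g t := by
        rw [← Fin.sum_univ_eq_sum_range f m]
        exact Finset.sum_congr rfl fun t _ => by simp [hf, t.isLt]

end Helpers
set_option maxHeartbeats 1000000 in
/-- For integers `i ≥ 1`, `j ≥ 0` and a symmetric `n × n` `(0,1)`-matrix `A`
with `i + j + 1 ≤ n` and `2·min(i, j+1) ≤ n`, with eigenvalues `μ` in nonincreasing order,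
`λ_{i+1}(A) - λ_{n-j}(A) ≤ n / √(2·min(i, j+1))`. -/
theorem spread_ij_min_upper_bound (n i j : ℕ) (hi : 1 ≤ i) (hn : i + j + 1 ≤ n)
    (hmin : 2 * min i (j + 1) ≤ n)
    (A : Matrix (Fin n) (Fin n) ℝ) (hA : A.IsHermitian)
    (hA01 : ∀ a b, A a b = 0 ∨ A a b = 1)
    (μ : Fin n → ℝ) (hmono : Antitone μ)
    (hperm : Finset.univ.val.map μ = Finset.univ.val.map hA.eigenvalues) :
    μ ⟨i, by omega⟩ - μ ⟨n - j - 1, by omega⟩ ≤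
      (n : ℝ) / Real.sqrt (2 * (min i (j + 1) : ℕ)) := by
  classical
  have hin : i < n := by omega
  have hjn : n - j - 1 < n := by omega
  have main : μ ⟨i, hin⟩ - μ ⟨n - j - 1, hjn⟩ ≤
      (n : ℝ) / Real.sqrt (2 * (min i (j + 1) : ℕ)) := by
    have hrhs0 : (0:ℝ) ≤ (n : ℝ) / Real.sqrt (2 * (min i (j + 1) : ℕ)) :=
      div_nonneg (Nat.cast_nonneg n) (Real.sqrt_nonneg _)
    rcases le_or_gt (μ ⟨i, hin⟩) (μ ⟨n - j - 1, hjn⟩) with hab | hab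
    · linarith
    have hij2 : i + j + 2 ≤ n := by
      by_contra hcon
      have heq : n - j - 1 = i := by omega
      have : (⟨n - j - 1, hjn⟩ : Fin n) = ⟨i, hin⟩ := by simp [Fin.ext_iff, heq]
      rw [this] at hab
      exact lt_irrefl _ hab
    obtain ⟨τ, hτ⟩ := exists_perm_of_multiset hmono hperm
    set u : Fin n → Fin n → ℝ := fun t => ⇑(hA.eigenvectorBasis (τ t)) with hu
    have huortho : ∀ s t, u s ⬝ᵥ u t = if s = t then 1 else 0 := by
      intro s t
      have h0 := hA.eigenvectorBasis.orthonormal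
      rw [orthonormal_iff_ite] at h0
      have h1 := h0 (τ s) (τ t)
      have h2 : (inner ℝ (hA.eigenvectorBasis (τ s)) (hA.eigenvectorBasis (τ t)) : ℝ)
          = u s ⬝ᵥ u t := by
        simp [hu, PiLp.inner_apply, dotProduct, mul_comm]
      rw [h2] at h1
      rw [h1]
      simp [EmbeddingLike.apply_eq_iff_eq]
    have hAu : ∀ t, A *ᵥ u t = μ t • u t := by
      intro t
      have := hA.mulVec_eigenvectorBasis (τ t)
      rw [hu]
      simp only []
      rw [this, hτ t]
    have huu : ∀ x y, ∑ t, u t x * u t y = if x = y then 1 else 0 := by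
      set P : Matrix (Fin n) (Fin n) ℝ := Matrix.of (fun t x => u t x) with hP
      have h1 : P * Pᵀ = 1 := by
        ext s t
        rw [Matrix.mul_apply, Matrix.one_apply]
        simpa [hP, dotProduct] using huortho s t
      have h2 : Pᵀ * P = 1 := mul_eq_one_comm.mp h1
      intro x y
      have h3 := Matrix.ext_iff.mpr h2 x y
      simpa [Matrix.mul_apply, Matrix.one_apply, hP] using h3
    have hAdecomp : ∀ x y, ∑ t, μ t * (u t x * u t y) = A x y := by
      intro x y
      calc ∑ t, μ t * (u t x * u t y)
          = ∑ t, (A *ᵥ u t) x * u t y := by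
            refine Finset.sum_congr rfl fun t _ => ?_
            rw [hAu t]
            simp only [Pi.smul_apply, smul_eq_mul]
            ring
        _ = ∑ t, ∑ z, (A x z * u t z) * u t y := by
            refine Finset.sum_congr rfl fun t _ => ?_
            have : (A *ᵥ u t) x = ∑ z, A x z * u t z := rfl
            rw [this, Finset.sum_mul]
        _ = ∑ z, ∑ t, (A x z * u t z) * u t y := Finset.sum_comm
        _ = ∑ z, A x z * ∑ t, u t z * u t y := by
            refine Finset.sum_congr rfl fun z _ => ?_
            rw [Finset.mul_sum]
            exact Finset.sum_congr rfl fun t _ => by ring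
        _ = ∑ z, A x z * (if z = y then 1 else 0) := by
            refine Finset.sum_congr rfl fun z _ => ?_
            rw [huu z y]
        _ = A x y := by simp
    set c : Fin n → ℝ := fun t => ∑ x, u t x with hc
    set C : Matrix (Fin n) (Fin n) ℝ := (2:ℝ) • Matrix.diagonal μ - Matrix.vecMulVec c c with hC
    have hCent : ∀ x y, C x y = 2 * (if x = y then μ x else 0) - c x * c y := by
      intro x y
      rw [hC]
      simp [Matrix.sub_apply, Matrix.smul_apply, Matrix.diagonal_apply, Matrix.vecMulVec_apply,
        smul_eq_mul]
    -- (iii)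
    have hcsq : ∑ t, (c t)^2 = (n:ℝ) := by
      calc ∑ t, (c t)^2 = ∑ t, ∑ x, ∑ y, u t x * u t y := by
            refine Finset.sum_congr rfl fun t _ => ?_
            rw [hc]
            simp only []
            rw [sq, Finset.sum_mul_sum]
        _ = ∑ x, ∑ t, ∑ y, u t x * u t y := Finset.sum_comm
        _ = ∑ x, ∑ y, ∑ t, u t x * u t y := Finset.sum_congr rfl fun x _ => Finset.sum_comm
        _ = ∑ x, ∑ y, (if x = y then (1:ℝ) else 0) :=
            Finset.sum_congr rfl fun x _ => Finset.sum_congr rfl fun y _ => huu x y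
        _ = ∑ x : Fin n, (1:ℝ) := by
            refine Finset.sum_congr rfl fun x _ => ?_
            simp
        _ = (n:ℝ) := by simp
    have hsumA : ∑ x, ∑ y, (A x y)^2 = ∑ x, ∑ y, A x y := by
      refine Finset.sum_congr rfl fun x _ => Finset.sum_congr rfl fun y _ => ?_
      rcases hA01 x y with h | h <;> rw [h] <;> norm_num
    -- (i)
    have hmusq : ∑ t, (μ t)^2 = ∑ x, ∑ y, A x y := by
      have hquad : ∀ t, ∑ x, u t x * ((A *ᵥ u t) x) = μ t := by
        intro t
        rw [hAu t]
        have h1 : ∑ x, u t x * (μ t • u t) x = μ t * ∑ x, u t x * u t x := by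
          rw [Finset.mul_sum]
          refine Finset.sum_congr rfl fun x _ => ?_
          simp only [Pi.smul_apply, smul_eq_mul]
          ring
        rw [h1]
        have h2 : ∑ x, u t x * u t x = 1 := by simpa [dotProduct] using huortho t t
        rw [h2, mul_one]
      rw [← hsumA]
      symm
      calc ∑ x, ∑ y, (A x y)^2
          = ∑ x, ∑ y, (∑ t, μ t * (u t x * u t y)) * A x y := by
            refine Finset.sum_congr rfl fun x _ => Finset.sum_congr rfl fun y _ => ?_
            rw [hAdecomp x y, sq]
        _ = ∑ x, ∑ y, ∑ t, (μ t * (u t x * u t y)) * A x y := by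
            refine Finset.sum_congr rfl fun x _ => Finset.sum_congr rfl fun y _ => ?_
            rw [Finset.sum_mul]
        _ = ∑ x, ∑ t, ∑ y, (μ t * (u t x * u t y)) * A x y :=
            Finset.sum_congr rfl fun x _ => Finset.sum_comm
        _ = ∑ t, ∑ x, ∑ y, (μ t * (u t x * u t y)) * A x y := Finset.sum_comm
        _ = ∑ t, μ t * ∑ x, ∑ y, (u t x * u t y) * A x y := by
            refine Finset.sum_congr rfl fun t _ => ?_
            rw [Finset.mul_sum]
            refine Finset.sum_congr rfl fun x _ => ?_
            rw [Finset.mul_sum]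
            exact Finset.sum_congr rfl fun y _ => by ring
        _ = ∑ t, μ t * μ t := by
            refine Finset.sum_congr rfl fun t _ => ?_
            congr 1
            calc ∑ x, ∑ y, (u t x * u t y) * A x y
                = ∑ x, u t x * ((A *ᵥ u t) x) := by
                  refine Finset.sum_congr rfl fun x _ => ?_
                  have : (A *ᵥ u t) x = ∑ y, A x y * u t y := rfl
                  rw [this, Finset.mul_sum]
                  exact Finset.sum_congr rfl fun y _ => by ring
              _ = μ t := hquad t
        _ = ∑ t, (μ t)^2 := by
            refine Finset.sum_congr rfl fun t _ => ?_
            rw [sq]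
    -- (ii)
    have hmucsq : ∑ t, μ t * (c t)^2 = ∑ x, ∑ y, A x y := by
      symm
      calc ∑ x, ∑ y, A x y
          = ∑ x, ∑ y, ∑ t, μ t * (u t x * u t y) := by
            refine Finset.sum_congr rfl fun x _ => Finset.sum_congr rfl fun y _ => ?_
            rw [hAdecomp x y]
        _ = ∑ x, ∑ t, ∑ y, μ t * (u t x * u t y) :=
            Finset.sum_congr rfl fun x _ => Finset.sum_comm
        _ = ∑ t, ∑ x, ∑ y, μ t * (u t x * u t y) := Finset.sum_comm
        _ = ∑ t, μ t * ((∑ x, u t x) * (∑ y, u t y)) := by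
            refine Finset.sum_congr rfl fun t _ => ?_
            rw [Finset.sum_mul_sum, Finset.mul_sum]
            refine Finset.sum_congr rfl fun x _ => ?_
            rw [Finset.mul_sum]
        _ = ∑ t, μ t * (c t)^2 := by
            refine Finset.sum_congr rfl fun t _ => ?_
            rw [hc]
            simp only []
            rw [sq]
    -- Frobenius norm of C
    have hfro : ∑ x, ∑ y, (C x y)^2 = (n:ℝ)^2 := by
      have hentry : ∀ x y, (C x y)^2 =
          (c x)^2 * (c y)^2 + (if y = x then 4*(μ x)^2 - 4*(μ x)*((c x)^2) else 0) := by
        intro x y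
        by_cases hxy : y = x
        · subst hxy
          rw [hCent, if_pos rfl, if_pos rfl]
          ring
        · rw [hCent, if_neg (Ne.symm hxy), if_neg hxy]
          ring
      calc ∑ x, ∑ y, (C x y)^2
          = ∑ x, ((c x)^2 * ∑ y, (c y)^2 + (4*(μ x)^2 - 4*(μ x)*((c x)^2))) := by
            refine Finset.sum_congr rfl fun x _ => ?_
            rw [Finset.sum_congr rfl fun y _ => hentry x y, Finset.sum_add_distrib,
              ← Finset.mul_sum]
            congr 1
            simp
        _ = (∑ x, (c x)^2) * (∑ y, (c y)^2) + (4*(∑ x, (μ x)^2) - 4*(∑ x, μ x * (c x)^2)) := by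
            rw [Finset.sum_add_distrib, Finset.sum_sub_distrib, ← Finset.sum_mul,
              ← Finset.mul_sum]
            have h4 : ∑ x : Fin n, 4 * μ x * (c x)^2 = 4 * ∑ x, μ x * (c x)^2 := by
              rw [Finset.mul_sum]
              exact Finset.sum_congr rfl fun x _ => by ring
            rw [h4]
        _ = (n:ℝ)^2 := by
            rw [hcsq, hmusq, hmucsq]
            ring
    -- Rayleigh quotient formula
    have hray : ∀ y : Fin n → ℝ, y ⬝ᵥ (C *ᵥ y) = 2 * (∑ t, μ t * (y t)^2) - (c ⬝ᵥ y)^2 := by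
      intro y
      have hCy : ∀ x, (C *ᵥ y) x = 2 * (μ x * y x) - c x * (c ⬝ᵥ y) := by
        intro x
        have h0 : (C *ᵥ y) x = ∑ z, C x z * y z := rfl
        rw [h0]
        have h1 : ∀ z, C x z * y z =
            2*((if x = z then μ x else 0) * y z) - c x * (c z * y z) := by
          intro z
          rw [hCent]
          ring
        rw [Finset.sum_congr rfl fun z _ => h1 z, Finset.sum_sub_distrib, ← Finset.mul_sum,
          ← Finset.mul_sum]
        have h2 : ∑ z, (if x = z then μ x else 0) * y z = μ x * y x := by
          simp [ite_mul]
        have h3 : ∑ z, c z * y z = c ⬝ᵥ y := rfl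
        rw [h2, h3]
      calc y ⬝ᵥ (C *ᵥ y) = ∑ x, y x * (2*(μ x * y x) - c x * (c ⬝ᵥ y)) := by
            rw [dotProduct]
            exact Finset.sum_congr rfl fun x _ => by rw [hCy x]
        _ = ∑ x, (2 * (μ x * (y x)^2) - (c x * y x) * (c ⬝ᵥ y)) :=
            Finset.sum_congr rfl fun x _ => by ring
        _ = 2 * (∑ t, μ t * (y t)^2) - (∑ x, c x * y x) * (c ⬝ᵥ y) := by
            rw [Finset.sum_sub_distrib, ← Finset.mul_sum, ← Finset.sum_mul]
        _ = 2 * (∑ t, μ t * (y t)^2) - (c ⬝ᵥ y)^2 := by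
            have hcd : ∑ x, c x * y x = c ⬝ᵥ y := rfl
            rw [hcd, sq]
    -- top family
    have hi1n : i + 1 ≤ n := by omega
    obtain ⟨w, hwon, hwc⟩ := exists_top_family i (fun t => c (Fin.castLE hi1n t))
    set vt : Fin i → Fin n → ℝ :=
      fun s x => if h : (x:ℕ) < i + 1 then w s ⟨x, h⟩ else 0 with hvt
    set bidx : Fin (j+1) → Fin n := fun r => ⟨n - j - 1 + r, by omega⟩ with hbidx
    set vb : Fin (j+1) → Fin n → ℝ := fun r x => if x = bidx r then 1 else 0 with hvb
    have hvtdot : ∀ (s t : Fin i), vt s ⬝ᵥ vt t = w s ⬝ᵥ w t := by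
      intro s t
      rw [dotProduct, dotProduct,
        ← sum_dite_fin hi1n (fun r => w s r * w t r)]
      refine Finset.sum_congr rfl fun x _ => ?_
      rw [hvt]
      simp only []
      by_cases h : (x:ℕ) < i + 1
      · rw [dif_pos h, dif_pos h, dif_pos h]
      · rw [dif_neg h, dif_neg h, dif_neg h, mul_zero]
    have hcvt : ∀ s, c ⬝ᵥ vt s = 0 := by
      intro s
      have h1 : c ⬝ᵥ vt s = (fun t => c (Fin.castLE hi1n t)) ⬝ᵥ w s := by
        rw [dotProduct, dotProduct,
          ← sum_dite_fin hi1n (fun r => c (Fin.castLE hi1n r) * w s r)]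
        refine Finset.sum_congr rfl fun x _ => ?_
        rw [hvt]
        simp only []
        by_cases h : (x:ℕ) < i + 1
        · rw [dif_pos h, dif_pos h]
          rfl
        · rw [dif_neg h, dif_neg h, mul_zero]
      rw [h1, hwc s]
    have hμvt : ∀ s, μ ⟨i, hin⟩ ≤ ∑ t, μ t * (vt s t)^2 := by
      intro s
      have h1 : ∑ t, μ t * (vt s t)^2
          = ∑ t' : Fin (i+1), μ (Fin.castLE hi1n t') * (w s t')^2 := by
        rw [← sum_dite_fin hi1n (fun t' => μ (Fin.castLE hi1n t') * (w s t')^2)]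
        refine Finset.sum_congr rfl fun x _ => ?_
        rw [hvt]
        simp only []
        by_cases h : (x:ℕ) < i + 1
        · rw [dif_pos h, dif_pos h]
          rfl
        · rw [dif_neg h, dif_neg h]
          ring
      have h2 : ∑ t' : Fin (i+1), (w s t')^2 = 1 := by
        have h3 := hwon s s
        rw [if_pos rfl] at h3
        rw [← h3, dotProduct]
        exact Finset.sum_congr rfl fun t' _ => sq (w s t') ▸ rfl
      calc μ ⟨i, hin⟩ = μ ⟨i, hin⟩ * ∑ t' : Fin (i+1), (w s t')^2 := by rw [h2, mul_one]
        _ = ∑ t' : Fin (i+1), μ ⟨i, hin⟩ * (w s t')^2 := Finset.mul_sum _ _ _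
        _ ≤ ∑ t' : Fin (i+1), μ (Fin.castLE hi1n t') * (w s t')^2 := by
            refine Finset.sum_le_sum fun t' _ => ?_
            refine mul_le_mul_of_nonneg_right (hmono ?_) (sq_nonneg _)
            rw [Fin.le_def]
            simpa using Nat.lt_succ_iff.mp t'.isLt
        _ = ∑ t, μ t * (vt s t)^2 := h1.symm
    have htop : ∀ s : Fin i, 2 * μ ⟨i, hin⟩ ≤ vt s ⬝ᵥ (C *ᵥ vt s) := by
      intro s
      rw [hray (vt s), hcvt s]
      have h1 := hμvt s
      nlinarith [h1]
    have hμvb : ∀ r, ∑ t, μ t * (vb r t)^2 = μ (bidx r) := by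
      intro r
      rw [hvb]
      simp only []
      rw [Finset.sum_eq_single (bidx r)]
      · rw [if_pos rfl]
        norm_num
      · intro t _ ht
        rw [if_neg ht]
        norm_num
      · intro h
        exact absurd (Finset.mem_univ _) h
    have hbot : ∀ r, vb r ⬝ᵥ (C *ᵥ vb r) ≤ 2 * μ ⟨n - j - 1, hjn⟩ := by
      intro r
      rw [hray (vb r), hμvb r]
      have h2 : μ (bidx r) ≤ μ ⟨n - j - 1, hjn⟩ := by
        refine hmono ?_
        rw [Fin.le_def, hbidx]
        exact Nat.le_add_right _ _
      nlinarith [sq_nonneg (c ⬝ᵥ vb r), h2]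
    set v : Fin i ⊕ Fin (j+1) → Fin n → ℝ := Sum.elim vt vb with hv
    have hcross : ∀ (s : Fin i) (r : Fin (j+1)), vt s ⬝ᵥ vb r = 0 := by
      intro s r
      rw [dotProduct]
      rw [Finset.sum_eq_single (bidx r)]
      · have hge : ¬ ((bidx r : ℕ) < i + 1) := by
          rw [hbidx]
          simp only []
          omega
        rw [hvt, hvb]
        simp only []
        rw [dif_neg hge, zero_mul]
      · intro t _ ht
        rw [hvb]
        simp only []
        rw [if_neg ht, mul_zero]
      · intro h
        exact absurd (Finset.mem_univ _) h
    have hvon : ∀ s t, v s ⬝ᵥ v t = if s = t then 1 else 0 := by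
      intro s t
      rcases s with s | r <;> rcases t with t | r'
      · rw [hv]
        simp only [Sum.elim_inl]
        rw [hvtdot s t, hwon s t]
        by_cases h : s = t
        · simp [h]
        · simp [h]
      · rw [hv]
        simp only [Sum.elim_inl, Sum.elim_inr]
        rw [hcross s r']
        simp
      · rw [hv]
        simp only [Sum.elim_inl, Sum.elim_inr]
        rw [dotProduct_comm, hcross t r]
        simp
      · rw [hv]
        simp only [Sum.elim_inr]
        have hvbvb : vb r ⬝ᵥ vb r' = if r = r' then 1 else 0 := by
          rw [dotProduct]
          rw [Finset.sum_eq_single (bidx r)]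
          · rw [hvb]
            simp only []
            norm_num
            by_cases h : r = r'
            · subst h
              simp
            · have hne : bidx r ≠ bidx r' := by
                rw [hbidx]
                simp only [ne_eq, Fin.mk.injEq]
                intro hcon
                exact h (Fin.ext (by omega))
              rw [if_neg hne, if_neg h]
          · intro t _ ht
            rw [hvb]
            simp only []
            rw [if_neg ht, zero_mul]
          · intro h
            exact absurd (Finset.mem_univ _) h
        rw [hvbvb]
        by_cases h : r = r'
        · simp [h]
        · simp [h]
    have hsum := sum_rayleigh_sq_le C v hvon
    rw [hfro] at hsum
    have hsplit : ∑ s : Fin i ⊕ Fin (j+1), (v s ⬝ᵥ (C *ᵥ v s))^2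
        = ∑ s : Fin i, (vt s ⬝ᵥ (C *ᵥ vt s))^2 + ∑ r : Fin (j+1), (vb r ⬝ᵥ (C *ᵥ vb r))^2 := by
      rw [Fintype.sum_sum_type]
      rfl
    rw [hsplit] at hsum
    set a := μ ⟨i, hin⟩ with haa
    set b := μ ⟨n - j - 1, hjn⟩ with hbb
    set k := min i (j + 1) with hk
    have hStop0 : (0:ℝ) ≤ ∑ s : Fin i, (vt s ⬝ᵥ (C *ᵥ vt s))^2 :=
      Finset.sum_nonneg fun s _ => sq_nonneg _
    have hSbot0 : (0:ℝ) ≤ ∑ r : Fin (j+1), (vb r ⬝ᵥ (C *ᵥ vb r))^2 :=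
      Finset.sum_nonneg fun r _ => sq_nonneg _
    have hki : (k:ℝ) ≤ (i:ℝ) := Nat.cast_le.mpr (min_le_left _ _)
    have hkj : (k:ℝ) ≤ (j:ℝ) + 1 := by
      have h0 : (k:ℝ) ≤ ((j+1 : ℕ):ℝ) := Nat.cast_le.mpr (min_le_right i (j+1))
      push_cast at h0
      exact h0
    have hk0 : (0:ℝ) ≤ (k:ℝ) := Nat.cast_nonneg _
    have hk1 : (1:ℝ) ≤ (k:ℝ) := by
      have h0 : 1 ≤ k := le_min hi (by omega)
      exact_mod_cast h0
    have htopsq : (i:ℝ) * (2*a)^2 ≤ ∑ s : Fin i, (vt s ⬝ᵥ (C *ᵥ vt s))^2 → True := fun _ => trivial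
    have hbound : 2 * (k:ℝ) * (a - b)^2 ≤ (n:ℝ)^2 := by
      rcases le_or_gt 0 a with haz | haz
      · have h4 : (k:ℝ) * (2*a)^2 ≤ ∑ s : Fin i, (vt s ⬝ᵥ (C *ᵥ vt s))^2 := by
          have h5 := Finset.card_nsmul_le_sum Finset.univ
            (fun s : Fin i => (vt s ⬝ᵥ (C *ᵥ vt s))^2) ((2*a)^2)
            (fun s _ => pow_le_pow_left₀ (by linarith) (htop s) 2)
          have h6 : (i:ℝ) * (2*a)^2 ≤ ∑ s : Fin i, (vt s ⬝ᵥ (C *ᵥ vt s))^2 := by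
            simpa [Finset.card_univ, nsmul_eq_mul] using h5
          nlinarith [mul_le_mul_of_nonneg_right hki (sq_nonneg (2*a))]
        rcases le_or_gt b 0 with hbz | hbz
        · have h5 : (k:ℝ) * (2*b)^2 ≤ ∑ r : Fin (j+1), (vb r ⬝ᵥ (C *ᵥ vb r))^2 := by
            have h6 := Finset.card_nsmul_le_sum Finset.univ
              (fun r : Fin (j+1) => (vb r ⬝ᵥ (C *ᵥ vb r))^2) ((2*b)^2)
              (fun r _ => by
              show (2*b)^2 ≤ (vb r ⬝ᵥ (C *ᵥ vb r))^2
              have hR := hbot r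
              nlinarith [mul_nonneg
                (by linarith : (0:ℝ) ≤ 2*b - (vb r ⬝ᵥ (C *ᵥ vb r)))
                (by linarith : (0:ℝ) ≤ -(2*b) - (vb r ⬝ᵥ (C *ᵥ vb r)))])
            have h7 : ((j:ℝ)+1) * (2*b)^2 ≤ ∑ r : Fin (j+1), (vb r ⬝ᵥ (C *ᵥ vb r))^2 := by
              have h8 : ((Finset.univ : Finset (Fin (j+1))).card : ℝ) = (j:ℝ)+1 := by
                simp [Finset.card_univ]
              calc ((j:ℝ)+1) * (2*b)^2
                  = ((Finset.univ : Finset (Fin (j+1))).card : ℝ) * (2*b)^2 := by rw [h8]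
                _ ≤ _ := by simpa [nsmul_eq_mul] using h6
            nlinarith [mul_le_mul_of_nonneg_right hkj (sq_nonneg (2*b))]
          nlinarith [h4, h5, hsum, mul_nonneg hk0 (sq_nonneg (a+b))]
        · have h8 : (a-b)^2 ≤ a^2 := by nlinarith [hab, hbz]
          nlinarith [h4, hSbot0, hsum, mul_le_mul_of_nonneg_left h8 hk0,
            mul_nonneg hk0 (sq_nonneg a)]
      · have hbz : b ≤ 0 := by linarith [hab]
        have h5 : (k:ℝ) * (2*b)^2 ≤ ∑ r : Fin (j+1), (vb r ⬝ᵥ (C *ᵥ vb r))^2 := by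
          have h6 := Finset.card_nsmul_le_sum Finset.univ
            (fun r : Fin (j+1) => (vb r ⬝ᵥ (C *ᵥ vb r))^2) ((2*b)^2)
            (fun r _ => by
              show (2*b)^2 ≤ (vb r ⬝ᵥ (C *ᵥ vb r))^2
              have hR := hbot r
              nlinarith [mul_nonneg
                (by linarith : (0:ℝ) ≤ 2*b - (vb r ⬝ᵥ (C *ᵥ vb r)))
                (by linarith : (0:ℝ) ≤ -(2*b) - (vb r ⬝ᵥ (C *ᵥ vb r)))])
          have h7 : ((j:ℝ)+1) * (2*b)^2 ≤ ∑ r : Fin (j+1), (vb r ⬝ᵥ (C *ᵥ vb r))^2 := by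
            have h8 : ((Finset.univ : Finset (Fin (j+1))).card : ℝ) = (j:ℝ)+1 := by
              simp [Finset.card_univ]
            calc ((j:ℝ)+1) * (2*b)^2
                = ((Finset.univ : Finset (Fin (j+1))).card : ℝ) * (2*b)^2 := by rw [h8]
              _ ≤ _ := by simpa [nsmul_eq_mul] using h6
          nlinarith [mul_le_mul_of_nonneg_right hkj (sq_nonneg (2*b))]
        have h8 : (a-b)^2 ≤ b^2 := by nlinarith [hab, haz]
        nlinarith [h5, hStop0, hsum, mul_le_mul_of_nonneg_left h8 hk0,
          mul_nonneg hk0 (sq_nonneg b)]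
    have h2k : (0:ℝ) < 2*(k:ℝ) := by linarith
    have hsqrtpos : 0 < Real.sqrt (2*(k:ℝ)) := Real.sqrt_pos.mpr h2k
    rw [le_div_iff₀ hsqrtpos]
    calc (a - b) * Real.sqrt (2*(k:ℝ)) = Real.sqrt ((a-b)^2 * (2*(k:ℝ))) := by
          rw [Real.sqrt_mul (sq_nonneg _), Real.sqrt_sq (by linarith [hab] : (0:ℝ) ≤ a - b)]
      _ ≤ Real.sqrt ((n:ℝ)^2) := Real.sqrt_le_sqrt (by nlinarith [hbound])
      _ = (n:ℝ) := Real.sqrt_sq (Nat.cast_nonneg n)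
  exact main
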